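/- arXiv:2209.14488 — 6 statements merged into one kernel-verified Lean document; each statement's English description precedes it below -/
import Mathlib

section
/- Let n ≥ 1, let A be an n×n real symmetric positive-definite matrix, let θ* ∈ ℝⁿ, let h > 0 and ρ0 ∈ ℝ with 0 < ρ0 < 1/2, and suppose that h·λ < 2 − 4ρ0 for every eigenvalue λ of A. If a sequence x : ℕ → ℝⁿ satisfies the three-step recurrence x_{k+3} = (1 − ρ0)·x_{k+2} + 2ρ0·x_{k+1} − ρ0·x_k − h·A·(x_{k+2} − θ*) for all k ≥ 0, then x_k converges to θ* as k → ∞. -/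
open Filter Complex Polynomial Matrix

lemma aux_geom (r : ℂ) (hr : ‖r‖ < 1) (u v : ℕ → ℂ)
    (hv : Tendsto v atTop (nhds 0))
    (hu : ∀ k, u (k+1) = r * u k + v k) :
    Tendsto u atTop (nhds 0) := by
  rw [NormedAddCommGroup.tendsto_nhds_zero] at hv ⊢
  intro ε hε
  have hr0 : (0:ℝ) ≤ ‖r‖ := norm_nonneg r
  have h1r : 0 < 1 - ‖r‖ := by linarith
  have hδ : 0 < ε/2 * (1 - ‖r‖) := by positivity
  obtain ⟨N, hN⟩ := (hv _ hδ).exists_forall_of_atTop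
  have claim : ∀ k, N ≤ k → ‖u k‖ ≤ ‖r‖^(k-N) * ‖u N‖ + ε/2 := by
    intro k hk
    induction k, hk using Nat.le_induction with
    | base => simp; linarith
    | succ k hk ih =>
      have hsub : k + 1 - N = (k - N) + 1 := by omega
      have h1 : ‖u (k+1)‖ ≤ ‖r‖ * ‖u k‖ + ‖v k‖ := by
        rw [hu k]; exact (norm_add_le _ _).trans (by rw [norm_mul])
      have h2 : ‖v k‖ < ε/2 * (1 - ‖r‖) := hN k hk
      have h3 : ‖r‖ * ‖u k‖ ≤ ‖r‖ * (‖r‖^(k-N) * ‖u N‖ + ε/2) :=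
        mul_le_mul_of_nonneg_left ih hr0
      rw [hsub, pow_succ]
      nlinarith [norm_nonneg (u N), pow_nonneg hr0 (k-N)]
  have htend : Tendsto (fun k => ‖r‖^(k-N) * ‖u N‖) atTop (nhds 0) := by
    have := (tendsto_pow_atTop_nhds_zero_of_lt_one hr0 hr).comp
      (tendsto_sub_atTop_nat N)
    simpa using this.mul_const ‖u N‖
  have hev : ∀ᶠ k in atTop, ‖r‖^(k-N) * ‖u N‖ < ε/2 :=
    htend.eventually (eventually_lt_nhds (half_pos hε))
  filter_upwards [hev, eventually_ge_atTop N] with k h1 h2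
  calc ‖u k‖ ≤ ‖r‖^(k-N) * ‖u N‖ + ε/2 := claim k h2
    _ < ε/2 + ε/2 := by linarith
    _ = ε := by ring

lemma aux_RH (a3 a2 a1 a0 : ℝ) (h3 : 0 < a3) (h2 : 0 < a2) (h1 : 0 < a1)
    (h0 : 0 < a0) (hrh : a0 * a3 < a1 * a2) (w : ℂ) (hw : 0 ≤ w.re)
    (hroot : (a3:ℂ) * w^3 + a2 * w^2 + a1 * w + a0 = 0) : False := by
  set x := w.re with hxdef
  set y := w.im with hydef
  simp only [Complex.ext_iff, pow_succ, pow_zero, one_mul, mul_re, mul_im,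
    add_re, add_im, ofReal_re, ofReal_im, zero_re, zero_im] at hroot
  obtain ⟨hre, him⟩ := hroot
  have hre' : a3 * (x^3 - 3*x*y^2) + a2 * (x^2 - y^2) + a1 * x + a0 = 0 := by
    linear_combination hre
  have him' : y * (3*a3*x^2 - a3*y^2 + 2*a2*x + a1) = 0 := by
    linear_combination him
  rcases mul_eq_zero.mp him' with hy0 | hE2
  · rw [hy0] at hre'
    have e : a3*x^3 + a2*x^2 + a1*x + a0 = 0 := by linear_combination hre'
    have t1 : 0 ≤ a3*x^3 := mul_nonneg h3.le (pow_nonneg hw 3)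
    have t2 : 0 ≤ a2*x^2 := mul_nonneg h2.le (sq_nonneg x)
    have t3 : 0 ≤ a1*x := mul_nonneg h1.le hw
    linarith
  · have key : 8*a3^2*x^3 + 8*a3*a2*x^2 + 2*a3*a1*x + 2*a2^2*x
        + a1*a2 - a3*a0 = 0 := by
      linear_combination (-a3) * hre' + (3*a3*x + a2) * hE2
    have t1 : 0 ≤ a3^2*x^3 := mul_nonneg (sq_nonneg a3) (pow_nonneg hw 3)
    have t2 : 0 ≤ a3*a2*x^2 := mul_nonneg (mul_pos h3 h2).le (sq_nonneg x)
    have t3 : 0 ≤ a3*a1*x := mul_nonneg (mul_pos h3 h1).le hw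
    have t4 : 0 ≤ a2^2*x := mul_nonneg (sq_nonneg a2) hw
    linarith

lemma aux_root (ρ0 μ : ℝ) (hρ0 : 0 < ρ0) (hρ0' : ρ0 < 1/2) (hμ : 0 < μ)
    (hμ' : μ < 2 - 4*ρ0) (z : ℂ)
    (hz : z^3 = ((1 - ρ0 - μ : ℝ) : ℂ) * z^2 + (2*ρ0 : ℝ) * z - (ρ0 : ℝ)) :
    ‖z‖ < 1 := by
  by_contra hc
  push_neg at hc
  push_cast at hz
  have hz1 : z + 1 ≠ 0 := by
    intro hzz
    have hzval : z = -1 := by linear_combination hzz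
    rw [hzval] at hz
    have h2 : ((2 - 4*ρ0 - μ : ℝ) : ℂ) = 0 := by push_cast; linear_combination -hz
    have h3 : (2 - 4*ρ0 - μ : ℝ) = 0 := by exact_mod_cast h2
    linarith
  set w : ℂ := (z - 1) / (z + 1) with hwdef
  have hw1 : w * (z + 1) = z - 1 := div_mul_cancel₀ _ hz1
  have hns : 1 ≤ Complex.normSq z := by
    have hsq : ‖z‖^2 = Complex.normSq z := by
      rw [Complex.sq_norm]
    nlinarith [norm_nonneg z]
  have hwre : 0 ≤ w.re := by
    rw [hwdef, Complex.div_re, ← add_div]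
    have hd : 0 < Complex.normSq (z + 1) := by rwa [Complex.normSq_pos]
    apply div_nonneg _ hd.le
    have e : (z - 1).re * (z + 1).re + (z - 1).im * (z + 1).im
        = Complex.normSq z - 1 := by
      simp only [Complex.normSq_apply, Complex.add_re, Complex.sub_re,
        Complex.add_im, Complex.sub_im, Complex.one_re, Complex.one_im]
      ring
    rw [e]; linarith
  have key : ((2 - 4*ρ0 - μ : ℝ):ℂ)*(z-1)^3 + ((4 + 4*ρ0 - μ : ℝ))*(z-1)^2*(z+1)
      + ((2 + μ : ℝ))*(z-1)*(z+1)^2 + ((μ:ℝ))*(z+1)^3 = 0 := by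
    push_cast
    linear_combination (8:ℂ) * hz
  have expand : (((2 - 4*ρ0 - μ : ℝ):ℂ) * w^3 + ((4 + 4*ρ0 - μ : ℝ)) * w^2
      + ((2 + μ : ℝ)) * w + ((μ:ℝ))) * (z+1)^3
      = ((2 - 4*ρ0 - μ : ℝ):ℂ)*(w*(z+1))^3 + ((4 + 4*ρ0 - μ : ℝ))*(w*(z+1))^2*(z+1)
      + ((2 + μ : ℝ))*(w*(z+1))*(z+1)^2 + ((μ:ℝ))*(z+1)^3 := by ring
  rw [hw1] at expand
  have hwroot : ((2 - 4*ρ0 - μ : ℝ):ℂ) * w^3 + ((4 + 4*ρ0 - μ : ℝ)) * w^2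
      + ((2 + μ : ℝ)) * w + ((μ:ℝ)) = 0 := by
    rcases mul_eq_zero.mp (expand.trans key) with h | h
    · exact h
    · exact absurd h (pow_ne_zero 3 hz1)
  exact aux_RH (2 - 4*ρ0 - μ) (4 + 4*ρ0 - μ) (2 + μ) μ (by linarith)
    (by linarith) (by linarith) hμ (by nlinarith) w hwre hwroot

lemma aux_scalar (a b c : ℝ)
    (hroots : ∀ z : ℂ, z^3 = (a:ℂ)*z^2 + (b:ℂ)*z + (c:ℂ) → ‖z‖ < 1)
    (y : ℕ → ℂ)
    (hy : ∀ k, y (k+3) = (a:ℂ)*y (k+2) + (b:ℂ)*y (k+1) + (c:ℂ)*y k) :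
    Tendsto y atTop (nhds 0) := by
  set P : Cubic ℂ := ⟨1, -(a:ℂ), -(b:ℂ), -(c:ℂ)⟩ with hP
  have ha : P.a ≠ 0 := one_ne_zero
  have hsplit : Splits (P.toPoly.map (RingHom.id ℂ)) := IsAlgClosed.splits _
  obtain ⟨r1, r2, r3, hr⟩ := (Cubic.splits_iff_roots_eq_three ha).mp hsplit
  have hmapid : Cubic.map (RingHom.id ℂ) P = P := by
    simp [Cubic.map]
  rw [hmapid] at hr
  -- Vieta
  have hb := Cubic.b_eq_three_roots ha (by rw [hmapid]; exact hr)
  have hcc := Cubic.c_eq_three_roots ha (by rw [hmapid]; exact hr)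
  have hd := Cubic.d_eq_three_roots ha (by rw [hmapid]; exact hr)
  simp only [hP, RingHom.id_apply, one_mul] at hb hcc hd
  -- roots
  have hroot : ∀ r ∈ ({r1, r2, r3} : Multiset ℂ), ‖r‖ < 1 := by
    intro r hrmem
    have : r ∈ P.roots := hr ▸ hrmem
    have heval := (Cubic.mem_roots_iff (Cubic.ne_zero_of_a_ne_zero ha) r).mp this
    apply hroots
    simp only [hP] at heval
    linear_combination heval
  have h1 : ‖r1‖ < 1 := hroot r1 (by simp)
  have h2 : ‖r2‖ < 1 := hroot r2 (by simp)
  have h3 : ‖r3‖ < 1 := hroot r3 (by simp)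
  -- Vieta cleaned
  have va : (a:ℂ) = r1 + r2 + r3 := by linear_combination -hb
  have vb : (b:ℂ) = -(r1*r2 + r1*r3 + r2*r3) := by linear_combination -hcc
  have vc : (c:ℂ) = r1*r2*r3 := by linear_combination -hd
  -- factor the recurrence
  set u : ℕ → ℂ := fun k => y (k+1) - r1 * y k with hu
  set v : ℕ → ℂ := fun k => u (k+1) - r2 * u k with hv
  have hvrec : ∀ k, v (k+1) = r3 * v k := by
    intro k
    simp only [hv, hu]
    have e3 := hy k
    rw [va, vb, vc] at e3
    linear_combination e3
  have hvgeom : ∀ k, v k = r3^k * v 0 := by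
    intro k
    induction k with
    | zero => simp
    | succ k ih => rw [hvrec k, ih, pow_succ]; ring
  have hvtend : Tendsto v atTop (nhds 0) := by
    have : Tendsto (fun k => r3^k * v 0) atTop (nhds 0) := by
      simpa using (tendsto_pow_atTop_nhds_zero_of_norm_lt_one h3).mul_const (v 0)
    exact this.congr (fun k => (hvgeom k).symm)
  have hutend : Tendsto u atTop (nhds 0) :=
    aux_geom r2 h2 u v hvtend (fun k => by simp only [hv]; ring)
  exact aux_geom r1 h1 y u hutend (fun k => by simp only [hu]; ring)

/-- Proposition 1 (matrix form): the 3-step method with consistency coefficients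
converges to the optimum for a symmetric positive definite linearized gradient,
provided `0 < ρ0 < 1/2` and `h·λ < 2 − 4ρ0` for every eigenvalue `λ` of `A`. -/
theorem multi_step_converges_matrix
    (n : ℕ) (hn : 1 ≤ n) (A : Matrix (Fin n) (Fin n) ℝ)
    (hA : A.PosDef) (θstar : Fin n → ℝ) (h ρ0 : ℝ) (hh : 0 < h)
    (hρ0 : 0 < ρ0) (hρ0' : ρ0 < 1 / 2)
    (heig : ∀ lam ∈ spectrum ℝ A, h * lam < 2 - 4 * ρ0)
    (x : ℕ → Fin n → ℝ)
    (hx : ∀ k : ℕ, x (k + 3) =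
      (1 - ρ0) • x (k + 2) + (2 * ρ0) • x (k + 1) - ρ0 • x k
        - h • A.mulVec (x (k + 2) - θstar)) :
    Filter.Tendsto x Filter.atTop (nhds θstar) := by
  classical
  have hAH : A.IsHermitian := hA.1
  have hAt : Aᵀ = A := by
    rw [← Matrix.conjTranspose_eq_transpose_of_trivial]; exact hAH
  set B := hAH.eigenvectorBasis with hB
  set lam := hAH.eigenvalues with hlam
  set e : ℕ → Fin n → ℝ := fun k => x k - θstar with he
  have herec : ∀ k, e (k+3) = (1 - ρ0) • e (k+2) + (2*ρ0) • e (k+1) - ρ0 • e k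
      - h • A.mulVec (e (k+2)) := by
    intro k
    have hek : e (k+2) = x (k+2) - θstar := rfl
    funext j
    have hxj := congrFun (hx k) j
    simp only [he, Pi.sub_apply, Pi.add_apply, Pi.smul_apply, smul_eq_mul] at hxj ⊢
    rw [hxj]; ring
  set V : Fin n → Fin n → ℝ := fun i => (WithLp.equiv 2 (Fin n → ℝ)) (B i) with hV
  set c : Fin n → ℕ → ℝ := fun i k => V i ⬝ᵥ e k with hc
  have hAe : ∀ i (w : Fin n → ℝ), V i ⬝ᵥ (A *ᵥ w)
      = lam i * (V i ⬝ᵥ w) := by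
    intro i w
    rw [Matrix.dotProduct_mulVec, ← hAt, Matrix.vecMul_transpose,
      hV]
    erw [hAH.mulVec_eigenvectorBasis i]
    rw [smul_dotProduct]
    rfl
  have hcrec : ∀ i k, c i (k+3) = (1 - ρ0 - h * lam i) * c i (k+2)
      + (2*ρ0) * c i (k+1) + (-ρ0) * c i k := by
    intro i k
    simp only [hc]
    rw [herec k]
    rw [dotProduct_sub, dotProduct_sub, dotProduct_add,
      dotProduct_smul, dotProduct_smul, dotProduct_smul,
      dotProduct_smul, hAe i]
    simp only [smul_eq_mul]
    ring
  have hctend : ∀ i, Tendsto (fun k => c i k) atTop (nhds 0) := by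
    intro i
    have hμ : 0 < h * lam i := mul_pos hh (hA.eigenvalues_pos i)
    have hμ' : h * lam i < 2 - 4*ρ0 := heig _ (hAH.eigenvalues_mem_spectrum_real i)
    have hY : Tendsto (fun k => ((c i k : ℂ))) atTop (nhds 0) := by
      apply aux_scalar (1 - ρ0 - h * lam i) (2*ρ0) (-ρ0)
      · intro z hzeq
        apply aux_root ρ0 (h * lam i) hρ0 (by linarith) hμ hμ' z
        push_cast at hzeq ⊢
        linear_combination hzeq
      · intro k
        have := hcrec i k
        push_cast
        rw [this]; push_cast; ring
    rw [tendsto_zero_iff_norm_tendsto_zero]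
    have := tendsto_zero_iff_norm_tendsto_zero.mp hY
    simpa using this
  -- assemble
  have hsum : ∀ k, (∑ i, c i k • B i) = (WithLp.toLp 2 (e k) : EuclideanSpace ℝ (Fin n)) := by
    intro k
    have hrepr := B.sum_repr' (WithLp.toLp 2 (e k) : EuclideanSpace ℝ (Fin n))
    rw [← hrepr]
    refine Finset.sum_congr rfl fun i _ => ?_
    congr 1
    rw [EuclideanSpace.inner_eq_star_dotProduct, dotProduct_comm]; rfl
  have hE : Tendsto (fun k => (WithLp.toLp 2 (e k) : EuclideanSpace ℝ (Fin n))) atTop (nhds 0) := by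
    have : Tendsto (fun k => ∑ i, c i k • B i) atTop (nhds (∑ i : Fin n, (0:ℝ) • B i)) := by
      exact tendsto_finset_sum _ fun i _ => (hctend i).smul_const (B i)
    simp only [zero_smul, Finset.sum_const_zero] at this
    exact Tendsto.congr (fun k => hsum k) this
  have hE' : Tendsto e atTop (nhds 0) := by
    exact ((PiLp.continuous_ofLp 2 _).tendsto 0).comp hE
  have hfin := hE'.add_const θstar
  rw [zero_add] at hfin
  refine hfin.congr fun k => ?_
  funext j
  simp [he]
end

section
/- Let λ > 0, h > 0 and ρ0 ∈ ℝ with 0 < ρ0 < 1/2 and λ·h < 2 − 4ρ0, and let θ* ∈ ℝ. If a real sequence x : ℕ → ℝ satisfies x_{k+3} = (1 − ρ0)·x_{k+2} + 2ρ0·x_{k+1} − ρ0·x_k − h·λ·(x_{k+2} − θ*) for all k ≥ 0, then x_k converges to θ* as k → ∞. -/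
open Filter

lemma aux_step (β : ℂ) (hβ : ‖β‖ < 1) (v u : ℕ → ℂ)
    (hv : Tendsto v atTop (nhds 0)) (hrec : ∀ k, u (k + 1) = β * u k + v k) :
    Tendsto u atTop (nhds 0) := by
  rw [NormedAddCommGroup.tendsto_nhds_zero] at hv ⊢
  intro ε hε
  have hb0 : 0 ≤ ‖β‖ := norm_nonneg _
  have h1b : 0 < 1 - ‖β‖ := by linarith
  have hε' : 0 < ε * (1 - ‖β‖) / 2 := by positivity
  obtain ⟨N, hN⟩ := (hv _ hε').exists_forall_of_atTop
  have key : ∀ j, ‖u (N + j)‖ ≤ ‖β‖ ^ j * ‖u N‖ + ε / 2 := by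
    intro j
    induction j with
    | zero => simp; linarith
    | succ j ih =>
      have h1 : u (N + j + 1) = β * u (N + j) + v (N + j) := hrec _
      have h2 : ‖v (N + j)‖ ≤ ε * (1 - ‖β‖) / 2 := le_of_lt (hN _ (by omega))
      have : ‖u (N + (j+1))‖ ≤ ‖β‖ * ‖u (N + j)‖ + ‖v (N + j)‖ := by
        rw [show N + (j+1) = N + j + 1 by omega, h1]
        exact (norm_add_le _ _).trans (by rw [norm_mul])
      calc ‖u (N + (j+1))‖ ≤ ‖β‖ * (‖β‖ ^ j * ‖u N‖ + ε / 2) + ε * (1 - ‖β‖) / 2 := by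
            refine this.trans ?_
            have := mul_le_mul_of_nonneg_left ih hb0
            linarith
        _ ≤ ‖β‖ ^ (j+1) * ‖u N‖ + ε / 2 := by
            have hβ1 : ‖β‖ * (ε / 2) + ε * (1 - ‖β‖) / 2 = ε / 2 := by ring
            have hβ2 : ‖β‖ * (‖β‖ ^ j * ‖u N‖) = ‖β‖ ^ (j + 1) * ‖u N‖ := by ring
            linarith
  have hpow : Tendsto (fun j : ℕ => ‖β‖ ^ j * ‖u N‖) atTop (nhds 0) := by
    simpa using (tendsto_pow_atTop_nhds_zero_of_norm_lt_one (by simpa using hβ)).mul_const ‖u N‖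
  rw [Metric.tendsto_atTop] at hpow
  obtain ⟨M, hM⟩ := hpow (ε / 2) (by linarith)
  rw [eventually_atTop]
  refine ⟨N + M, fun k hk => ?_⟩
  have hkN : k = N + (k - N) := by omega
  have h1 := key (k - N)
  have h2 := hM (k - N) (by omega)
  rw [Real.dist_eq, sub_zero] at h2
  have : ‖β‖ ^ (k - N) * ‖u N‖ < ε / 2 := by
    have := abs_nonneg (‖β‖ ^ (k - N) * ‖u N‖)
    calc ‖β‖ ^ (k - N) * ‖u N‖ ≤ |‖β‖ ^ (k - N) * ‖u N‖| := le_abs_self _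
      _ < ε / 2 := h2
  rw [hkN]
  linarith


open Complex

lemma real_root_bound (ρ0 a r : ℝ) (hρ0 : 0 < ρ0) (hρ0' : ρ0 < 1 / 2)
    (ha : 0 < a) (ha' : a < 2 - 4 * ρ0)
    (hr : r ^ 3 + (ρ0 - 1 + a) * r ^ 2 - 2 * ρ0 * r + ρ0 = 0) :
    -1 < r ∧ r < 1 := by
  constructor
  · by_contra hc
    push_neg at hc  -- r ≤ -1
    -- p(r) = -(t-1)(t^2+3ρ0 t+ρ0) + (a-2+4ρ0) t^2 < 0 with t = -r ≥ 1
    nlinarith [mul_nonneg (by linarith : (0:ℝ) ≤ -r - 1)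
        (by nlinarith : (0:ℝ) ≤ r ^ 2 - 3 * ρ0 * r + ρ0),
      mul_pos (by linarith : (0:ℝ) < 2 - 4 * ρ0 - a) (by nlinarith : (0:ℝ) < r ^ 2)]
  · by_contra hc
    push_neg at hc  -- 1 ≤ r
    nlinarith [mul_nonneg (by linarith : (0:ℝ) ≤ r - 1)
        (by nlinarith : (0:ℝ) ≤ r ^ 2 + ρ0 * r - ρ0),
      mul_pos ha (by nlinarith : (0:ℝ) < r ^ 2)]

lemma root_norm_lt_one (ρ0 a : ℝ) (hρ0 : 0 < ρ0) (hρ0' : ρ0 < 1 / 2)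
    (ha : 0 < a) (ha' : a < 2 - 4 * ρ0) (z : ℂ)
    (hz : z ^ 3 + ((ρ0 : ℂ) - 1 + (a : ℂ)) * z ^ 2 - 2 * (ρ0 : ℂ) * z + (ρ0 : ℂ) = 0) :
    ‖z‖ < 1 := by
  set s := z.re with hs
  set t := z.im with ht
  have hzst : z = (s : ℂ) + (t : ℂ) * I := (re_add_im z).symm
  rw [hzst] at hz
  have hre := congrArg Complex.re hz
  have him := congrArg Complex.im hz
  simp only [add_re, add_im, sub_re, sub_im, mul_re, mul_im, ofReal_re, ofReal_im,
    I_re, I_im, pow_succ, pow_zero, one_mul, one_re, one_im, zero_re, zero_im,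
    Complex.re_ofNat, Complex.im_ofNat] at hre him
  ring_nf at hre him
  -- now two real equations
  have hnormsq : ‖z‖ ^ 2 = s ^ 2 + t ^ 2 := by
    rw [Complex.sq_norm, Complex.normSq_apply]; ring
  by_cases htz : t = 0
  · rw [htz] at hre
    ring_nf at hre
    have hr2 : s ^ 3 + (ρ0 - 1 + a) * s ^ 2 - 2 * ρ0 * s + ρ0 = 0 := by linear_combination hre
    obtain ⟨h1, h2⟩ := real_root_bound ρ0 a s hρ0 hρ0' ha ha' hr2
    nlinarith [norm_nonneg z]
  · -- imaginary part gives A = 0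
    have hA : 3 * s ^ 2 - t ^ 2 + 2 * (ρ0 - 1 + a) * s - 2 * ρ0 = 0 := by
      have h0 : t * (3 * s ^ 2 - t ^ 2 + 2 * (ρ0 - 1 + a) * s - 2 * ρ0) = 0 := by
        linear_combination him
      rcases mul_eq_zero.mp h0 with h | h
      · exact absurd h htz
      · exact h
    have hB : ρ0 - (s ^ 2 + t ^ 2) * ((ρ0 - 1 + a) + 2 * s) = 0 := by
      linear_combination hre - s * hA
    set r : ℝ := -((ρ0 - 1 + a) + 2 * s) with hrdef
    have hroot : r ^ 3 + (ρ0 - 1 + a) * r ^ 2 - 2 * ρ0 * r + ρ0 = 0 := by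
      linear_combination r * hA + hB + (r ^ 2 - 2 * s * r + (s ^ 2 + t ^ 2)) * hrdef
    obtain ⟨h1, h2⟩ := real_root_bound ρ0 a r hρ0 hρ0' ha ha' hroot
    have hval : ((ρ0 + s) ^ 2 + t ^ 2) * (-ρ0 - r) = a * ρ0 ^ 2 + ρ0 ^ 2 + ρ0 := by
      linear_combination ρ0 * hA - hB - ((ρ0 + s) ^ 2 + t ^ 2) * hrdef
    have hpos : 0 < (ρ0 + s) ^ 2 + t ^ 2 := by positivity
    have hrneg : r < -ρ0 := by nlinarith
    -- m * (-r) = ρ0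
    have hm : (s ^ 2 + t ^ 2) * (-r) = ρ0 := by
      linear_combination -hB - (s ^ 2 + t ^ 2) * hrdef
    have hmlt : s ^ 2 + t ^ 2 < 1 := by nlinarith [sq_nonneg s, sq_nonneg t]
    nlinarith [norm_nonneg z]


open Filter Complex Polynomial

section helpers

-- existence of roots of the cubic over ℂ
lemma cubic_roots (c₂ c₁ c₀ : ℂ) :
    ∃ α β γ : ℂ, (α + β + γ = -c₂) ∧ (α*β + α*γ + β*γ = c₁) ∧ (α*β*γ = -c₀) := by
  have hdeg : (0 : WithBot ℕ) < (X ^ 3 + C c₂ * X ^ 2 + C c₁ * X + C c₀ : ℂ[X]).degree := by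
    have : (X ^ 3 + C c₂ * X ^ 2 + C c₁ * X + C c₀ : ℂ[X]).degree = 3 := by
      compute_degree!
    rw [this]; norm_num
  obtain ⟨α, hα⟩ := Complex.exists_root hdeg
  have hα' : α ^ 3 + c₂ * α ^ 2 + c₁ * α + c₀ = 0 := by
    have := hα
    simp [Polynomial.IsRoot, Polynomial.eval_add, Polynomial.eval_mul] at this
    linear_combination this
  have hdeg2 : (0 : WithBot ℕ) <
      (X ^ 2 + C (c₂ + α) * X + C (c₁ + c₂ * α + α ^ 2) : ℂ[X]).degree := by
    have : (X ^ 2 + C (c₂ + α) * X + C (c₁ + c₂ * α + α ^ 2) : ℂ[X]).degree = 2 := by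
      compute_degree!
    rw [this]; norm_num
  obtain ⟨β, hβ⟩ := Complex.exists_root hdeg2
  have hβ' : β ^ 2 + (c₂ + α) * β + (c₁ + c₂ * α + α ^ 2) = 0 := by
    have := hβ
    simp [Polynomial.IsRoot, Polynomial.eval_add, Polynomial.eval_mul] at this
    linear_combination this
  refine ⟨α, β, -(c₂ + α) - β, by ring, ?_, ?_⟩
  · linear_combination -hβ'
  · linear_combination (-α) * hβ' + hα'

end helpers


/-- Proposition 1, scalar case: the 3-step method converges to `θstar` when
`0 < ρ0 < 1/2` and `λ·h < 2 − 4ρ0`. -/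
theorem multi_step_converges_scalar
    (lam h ρ0 θstar : ℝ) (hlam : 0 < lam) (hh : 0 < h)
    (hρ0 : 0 < ρ0) (hρ0' : ρ0 < 1 / 2) (hstab : lam * h < 2 - 4 * ρ0)
    (x : ℕ → ℝ)
    (hx : ∀ k : ℕ, x (k + 3) =
      (1 - ρ0) * x (k + 2) + 2 * ρ0 * x (k + 1) - ρ0 * x k
        - h * lam * (x (k + 2) - θstar)) :
    Filter.Tendsto x Filter.atTop (nhds θstar) := by
  set a : ℝ := h * lam with hadef
  have ha : 0 < a := by positivity
  have ha' : a < 2 - 4 * ρ0 := by rw [hadef]; linarith [hstab]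
  set y : ℕ → ℂ := fun k => ((x k - θstar : ℝ) : ℂ) with hy
  have hyrec : ∀ k, y (k + 3) + ((ρ0 : ℂ) - 1 + (a : ℂ)) * y (k + 2)
      - 2 * (ρ0 : ℂ) * y (k + 1) + (ρ0 : ℂ) * y k = 0 := by
    intro k
    have h0 := congrArg (fun r : ℝ => (r : ℂ)) (hx k)
    push_cast at h0
    simp only [hy]
    push_cast
    linear_combination h0
  obtain ⟨α, β, γ, he1, he2, he3⟩ :=
    cubic_roots ((ρ0 : ℂ) - 1 + (a : ℂ)) (-2 * (ρ0 : ℂ)) (ρ0 : ℂ)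
  -- each of α β γ is a root of the cubic, hence of norm < 1
  have hroot : ∀ z : ℂ, (z = α ∨ z = β ∨ z = γ) →
      z ^ 3 + ((ρ0 : ℂ) - 1 + (a : ℂ)) * z ^ 2 - 2 * (ρ0 : ℂ) * z + (ρ0 : ℂ) = 0 := by
    intro z hz
    have key : ∀ w : ℂ, (w - α) * (w - β) * (w - γ) =
        w ^ 3 + ((ρ0 : ℂ) - 1 + (a : ℂ)) * w ^ 2 - 2 * (ρ0 : ℂ) * w + (ρ0 : ℂ) := by
      intro w
      linear_combination (-(w ^ 2)) * he1 + w * he2 + (-1 : ℂ) * he3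
    rcases hz with rfl | rfl | rfl
    · rw [← key]; ring
    · rw [← key]; ring
    · rw [← key]; ring
  have hαn : ‖α‖ < 1 := root_norm_lt_one ρ0 a hρ0 hρ0' ha ha' α (hroot α (Or.inl rfl))
  have hβn : ‖β‖ < 1 := root_norm_lt_one ρ0 a hρ0 hρ0' ha ha' β (hroot β (Or.inr (Or.inl rfl)))
  have hγn : ‖γ‖ < 1 := root_norm_lt_one ρ0 a hρ0 hρ0' ha ha' γ (hroot γ (Or.inr (Or.inr rfl)))
  -- build the cascade
  set u : ℕ → ℂ := fun k => y (k + 1) - γ * y k with hu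
  set w : ℕ → ℂ := fun k => u (k + 1) - β * u k with hw
  have hwstep : ∀ k, w (k + 1) = α * w k := by
    intro k
    simp only [hw, hu]
    linear_combination hyrec k - (y (k + 2)) * he1 + (y (k + 1)) * he2 - (y k) * he3
  have hwgeo : ∀ k, w k = α ^ k * w 0 := by
    intro k
    induction k with
    | zero => simp
    | succ k ih => rw [hwstep k, ih, pow_succ]; ring
  have hw0 : Tendsto w atTop (nhds 0) := by
    have : Tendsto (fun k : ℕ => α ^ k * w 0) atTop (nhds 0) := by
      simpa using (tendsto_pow_atTop_nhds_zero_of_norm_lt_one hαn).mul_const (w 0)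
    exact this.congr (fun k => (hwgeo k).symm)
  have hu0 : Tendsto u atTop (nhds 0) := by
    refine aux_step β hβn w u hw0 (fun k => ?_)
    simp only [hw]; ring
  have hy0 : Tendsto y atTop (nhds 0) := by
    refine aux_step γ hγn u y hu0 (fun k => ?_)
    simp only [hu]; ring
  have hre : Tendsto (fun k => x k - θstar) atTop (nhds 0) := by
    have hcont := (Complex.continuous_re.tendsto (0 : ℂ)).comp hy0
    simpa [hy, Function.comp_def] using hcont
  simpa using hre.add_const θstar
end

section
/- Let ρ0 ∈ ℝ with 0 < ρ0 < 1/2. Then z = 1 is a root of the polynomial ρ(z) = z³ + (ρ0 − 1)z² − 2ρ0·z + ρ0, every complex root z of ρ(z) satisfies |z| ≤ 1, and every complex root z ≠ 1 satisfies |z| < 1 (so 1 is a simple root and the only root on the unit circle). -/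
lemma zero_stability_aux
    (ρ0 : ℝ) (h1 : 0 < ρ0) (h2 : ρ0 < 1 / 2) (z : ℂ)
    (hz : z ^ 3 + ((ρ0 : ℂ) - 1) * z ^ 2 - 2 * (ρ0 : ℂ) * z + (ρ0 : ℂ) = 0)
    (hne : z ≠ 1) : ‖z‖ < 1 := by
  have hq : z ^ 2 + (ρ0 : ℂ) * z - (ρ0 : ℂ) = 0 := by
    have hfac : (z - 1) * (z ^ 2 + (ρ0 : ℂ) * z - (ρ0 : ℂ)) = 0 := by
      linear_combination hz
    rcases mul_eq_zero.mp hfac with h | h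
    · exact absurd (sub_eq_zero.mp h) hne
    · exact h
  have hz2 : z ^ 2 = (ρ0 : ℂ) * (1 - z) := by linear_combination hq
  have habs : ‖z‖ ^ 2 = ρ0 * ‖1 - z‖ := by
    calc ‖z‖ ^ 2 = ‖z ^ 2‖ := (norm_pow z 2).symm
      _ = ‖(ρ0 : ℂ) * (1 - z)‖ := by rw [hz2]
      _ = ρ0 * ‖1 - z‖ := by
          rw [norm_mul, Complex.norm_real, Real.norm_eq_abs, abs_of_pos h1]
  have htri : ‖1 - z‖ ≤ 1 + ‖z‖ := by
    have := norm_sub_le (1 : ℂ) z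
    simpa using this
  nlinarith [norm_nonneg z, norm_nonneg (1 - z)]

/-- Zero-stability of the 3-step method: `1` is a root of
`ρ(z) = z³ + (ρ0 − 1)z² − 2ρ0 z + ρ0`, all roots lie in the closed unit disk,
and every root other than `1` lies strictly inside the unit disk. -/
theorem zero_stability
    (ρ0 : ℝ) (h1 : 0 < ρ0) (h2 : ρ0 < 1 / 2) :
    ((1 : ℂ) ^ 3 + ((ρ0 : ℂ) - 1) * 1 ^ 2 - 2 * (ρ0 : ℂ) * 1 + (ρ0 : ℂ) = 0) ∧
    (∀ z : ℂ, z ^ 3 + ((ρ0 : ℂ) - 1) * z ^ 2 - 2 * (ρ0 : ℂ) * z + (ρ0 : ℂ) = 0 →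
      ‖z‖ ≤ 1) ∧
    (∀ z : ℂ, z ^ 3 + ((ρ0 : ℂ) - 1) * z ^ 2 - 2 * (ρ0 : ℂ) * z + (ρ0 : ℂ) = 0 →
      z ≠ 1 → ‖z‖ < 1) := by
  refine ⟨by ring, ?_, fun z hz hne => zero_stability_aux ρ0 h1 h2 z hz hne⟩
  intro z hz
  by_cases hne : z = 1
  · simp [hne]
  · exact le_of_lt (zero_stability_aux ρ0 h1 h2 z hz hne)
end

section
/- Let ρ0, μ ∈ ℝ with 0 < ρ0 < 1/2 and 0 < μ < 2 − 4ρ0. Then every complex root z of the cubic z³ + (ρ0 − 1 + μ)·z² − 2ρ0·z + ρ0 satisfies |z| < 1. -/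
lemma quad_abs_lt (B C : ℝ) (hC0 : 0 < C) (hC1 : C < 1)
    (hq1 : 0 < 1 + B + C) (hq2 : 0 < 1 - B + C)
    (z : ℂ) (hz : z ^ 2 + (B : ℂ) * z + (C : ℂ) = 0) :
    ‖z‖ < 1 := by
  have hx := congrArg Complex.re hz
  have hy := congrArg Complex.im hz
  simp [pow_two, Complex.mul_re, Complex.mul_im] at hx hy
  set x := z.re
  set y := z.im
  have habs : ‖z‖ ^ 2 = x ^ 2 + y ^ 2 := by
    rw [Complex.sq_norm, Complex.normSq_apply]; ring
  have key : x ^ 2 + y ^ 2 < 1 := by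
    have hy' : y * (x + x + B) = 0 := by linarith [hy]
    rcases mul_eq_zero.1 hy' with h0 | h0
    · rw [h0] at hx
      rcases lt_or_ge x 1 with hx1 | hx1
      · rcases lt_or_ge (-1) x with hx2 | hx2
        · nlinarith
        · exfalso; nlinarith [mul_nonneg (by linarith : (0:ℝ) ≤ -1 - x) (by linarith : (0:ℝ) ≤ -x - C)]
      · exfalso; nlinarith [mul_nonneg (by linarith : (0:ℝ) ≤ x - 1) (by linarith : (0:ℝ) ≤ x - C)]
    · nlinarith
  nlinarith [norm_nonneg z]

/-- Absolute stability of the 3-step method: for `0 < ρ0 < 1/2` and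
`0 < μ < 2 − 4ρ0`, all roots of `z³ + (ρ0 − 1 + μ)z² − 2ρ0 z + ρ0` have modulus
strictly less than `1`. -/
theorem absolute_stability
    (ρ0 μ : ℝ) (h1 : 0 < ρ0) (h2 : ρ0 < 1 / 2)
    (h3 : 0 < μ) (h4 : μ < 2 - 4 * ρ0) :
    ∀ z : ℂ, z ^ 3 + ((ρ0 : ℂ) - 1 + (μ : ℂ)) * z ^ 2 - 2 * (ρ0 : ℂ) * z + (ρ0 : ℂ) = 0 →
      ‖z‖ < 1 := by
  -- find a real root r ∈ (-1, -ρ0)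
  set f : ℝ → ℝ := fun t => t ^ 3 + (ρ0 - 1 + μ) * t ^ 2 - 2 * ρ0 * t + ρ0 with hf
  have hcont : ContinuousOn f (Set.Icc (-1) (-ρ0)) := by fun_prop
  have hle : (-1 : ℝ) ≤ -ρ0 := by linarith
  have hf1 : f (-1) = 4 * ρ0 + μ - 2 := by simp [hf]; ring
  have hf2 : f (-ρ0) = ρ0 ^ 2 * μ + ρ0 ^ 2 + ρ0 := by simp [hf]; ring
  have hmem : (0 : ℝ) ∈ Set.Ioo (f (-1)) (f (-ρ0)) := by
    rw [hf1, hf2]; constructor <;> nlinarith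
  obtain ⟨r, hrIoo, hr⟩ := intermediate_value_Ioo hle hcont hmem
  obtain ⟨hr1, hr2⟩ := hrIoo
  have hrneg : r < 0 := by linarith
  have hrne : r ≠ 0 := ne_of_lt hrneg
  -- quadratic factor coefficients
  set B : ℝ := (ρ0 - 1 + μ) + r with hB
  set C : ℝ := -ρ0 / r with hCdef
  have hCr : C * r = -ρ0 := by rw [hCdef]; field_simp
  have hC0 : 0 < C := by
    rw [hCdef, div_pos_iff]; right; constructor <;> linarith
  have hC1 : C < 1 := by
    nlinarith [hCr]
  have hrf : r ^ 3 + (ρ0 - 1 + μ) * r ^ 2 - 2 * ρ0 * r + ρ0 = 0 := hr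
  have hq1 : 0 < 1 + B + C := by
    have hid : (1 - r) * (1 + B + C) = μ := by
      rw [hB, hCdef]; field_simp; nlinarith [hrf]
    nlinarith [hid]
  have hq2 : 0 < 1 - B + C := by
    have hid : (-1 - r) * (1 - B + C) = 4 * ρ0 + μ - 2 := by
      rw [hB, hCdef]; field_simp; nlinarith [hrf]
    nlinarith [hid]
  intro z hz
  have hrfC : (r : ℂ) ^ 3 + ((ρ0 : ℂ) - 1 + (μ : ℂ)) * (r : ℂ) ^ 2 - 2 * (ρ0 : ℂ) * r + ρ0 = 0 := by
    exact_mod_cast congrArg (fun t : ℝ => (t : ℂ)) hrf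
  have hCrC : (C : ℂ) * (r : ℂ) = -(ρ0 : ℂ) := by exact_mod_cast congrArg (fun t : ℝ => (t : ℂ)) hCr
  have hfac : (r : ℂ) * ((z - r) * (z ^ 2 + (B : ℂ) * z + (C : ℂ))) = 0 := by
    have hBC : (B : ℂ) = ((ρ0 : ℂ) - 1 + (μ : ℂ)) + r := by push_cast [hB]; ring
    rw [hBC]
    linear_combination (r : ℂ) * hz - z * hrfC + z * hCrC - (r : ℂ) * hCrC
  have hrneC : (r : ℂ) ≠ 0 := by exact_mod_cast hrne
  rcases mul_eq_zero.1 hfac with h | h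
  · exact absurd h hrneC
  rcases mul_eq_zero.1 h with h | h
  · rw [sub_eq_zero] at h
    rw [h, Complex.norm_real, Real.norm_eq_abs, abs_lt]
    constructor <;> linarith
  · exact quad_abs_lt B C hC0 hC1 hq1 hq2 z h
end

section
/- Let N ≥ 1, let a_1, …, a_N be real numbers with mean ā = (1/N)·Σᵢ aᵢ, let c ∈ ℝ and ρ0 ∈ ℝ, and for p, q ∈ {1, …, N} define M_i(p, q) = (1 − ρ0)·a_i + 2ρ0·a_q − ρ0·a_p + c. Write Δ = Σᵢ (a_i − ā)². Then Σ_{i=1}^{N} (1/N²)·Σ_{p=1}^{N} Σ_{q=1}^{N} ( M_i(p, q) − (ā + c) )² = (1 − 2ρ0 + 6ρ0²)·Δ. -/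
open Finset

/-- Dispersion identity from the proof of Proposition 2: the expected squared
deviations of the multi-step updated learners around `ā + c` sum to
`(1 − 2ρ0 + 6ρ0²)·Δ`. -/
theorem multi_step_dispersion_identity
    (N : ℕ) (hN : 1 ≤ N) (a : Fin N → ℝ) (c ρ0 : ℝ)
    (abar : ℝ) (habar : abar = (1 / (N : ℝ)) * ∑ i : Fin N, a i)
    (Δ : ℝ) (hΔ : Δ = ∑ i : Fin N, (a i - abar) ^ 2) :
    ∑ i : Fin N, (1 / (N : ℝ) ^ 2) *
        ∑ p : Fin N, ∑ q : Fin N,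
          (((1 - ρ0) * a i + 2 * ρ0 * a q - ρ0 * a p + c) - (abar + c)) ^ 2
      = (1 - 2 * ρ0 + 6 * ρ0 ^ 2) * Δ := by
  have hNR : (N : ℝ) ≠ 0 := by positivity
  set b : Fin N → ℝ := fun i => a i - abar with hb
  have h0 : ∑ i : Fin N, b i = 0 := by
    simp only [hb, Finset.sum_sub_distrib, Finset.sum_const, Finset.card_univ,
      Fintype.card_fin, nsmul_eq_mul, habar]
    field_simp
    ring
  have hD : Δ = ∑ i : Fin N, b i ^ 2 := hΔ
  have key : ∀ i p q : Fin N,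
      (((1 - ρ0) * a i + 2 * ρ0 * a q - ρ0 * a p + c) - (abar + c)) ^ 2
      = (1 - ρ0)^2 * b i ^2 + 4*ρ0^2 * b q ^2 + ρ0^2 * b p ^2
        + (4*ρ0*(1-ρ0)*b i) * b q - (2*ρ0*(1-ρ0)*b i) * b p - (4*ρ0^2 * b q) * b p := by
    intro i p q; simp only [hb]; ring
  have inner : ∀ i : Fin N,
      ∑ p : Fin N, ∑ q : Fin N,
        (((1 - ρ0) * a i + 2 * ρ0 * a q - ρ0 * a p + c) - (abar + c)) ^ 2
      = (N:ℝ)^2 * ((1-ρ0)^2 * b i ^2) + (N:ℝ) * (5*ρ0^2) * Δ := by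
    intro i
    simp only [key, Finset.sum_add_distrib, Finset.sum_sub_distrib, Finset.sum_const,
      Finset.card_univ, Fintype.card_fin, nsmul_eq_mul, ← Finset.mul_sum, ← Finset.sum_mul,
      h0, mul_zero, zero_mul, sub_zero, add_zero, hD]
    ring
  have hsum : ∀ x : Fin N, 1/(N:ℝ)^2 * ((N:ℝ)^2*((1-ρ0)^2*b x^2) + (N:ℝ)*(5*ρ0^2)*Δ)
      = (1-ρ0)^2 * b x^2 + (1/(N:ℝ))*(5*ρ0^2)*Δ := by
    intro x; field_simp
  simp only [inner, hsum]
  rw [Finset.sum_add_distrib, ← Finset.mul_sum, ← hD, Finset.sum_const, Finset.card_univ,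
    Fintype.card_fin, nsmul_eq_mul]
  field_simp
  ring
end

section
/- Let N ≥ 1, let a_1, …, a_N be real numbers with mean ā = (1/N)·Σᵢ aᵢ such that Δ = Σᵢ (a_i − ā)² > 0, let c ∈ ℝ, and let ρ0 ∈ ℝ with 0 < ρ0 < 1/3. For p, q ∈ {1, …, N} define M_i(p, q) = (1 − ρ0)·a_i + 2ρ0·a_q − ρ0·a_p + c. Then Σ_{i=1}^{N} (1/N²)·Σ_{p=1}^{N} Σ_{q=1}^{N} ( M_i(p, q) − (ā + c) )² < Σ_{i=1}^{N} (a_i − ā)². -/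
open Finset

/-- Proposition 2, part 2: for `0 < ρ0 < 1/3`, the expected dispersion of the
multi-step updated base policies around the updated ensemble is strictly smaller
than the single-step dispersion `Σᵢ (aᵢ − ā)²`. -/
theorem multi_step_reduces_dispersion
    (N : ℕ) (hN : 1 ≤ N) (a : Fin N → ℝ) (c ρ0 : ℝ)
    (hρ0 : 0 < ρ0) (hρ0' : ρ0 < 1 / 3)
    (abar : ℝ) (habar : abar = (1 / (N : ℝ)) * ∑ i : Fin N, a i)
    (hΔpos : 0 < ∑ i : Fin N, (a i - abar) ^ 2) :
    ∑ i : Fin N, (1 / (N : ℝ) ^ 2) *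
        ∑ p : Fin N, ∑ q : Fin N,
          (((1 - ρ0) * a i + 2 * ρ0 * a q - ρ0 * a p + c) - (abar + c)) ^ 2
      < ∑ i : Fin N, (a i - abar) ^ 2 := by
  have hNpos : (0:ℝ) < N := by
    have : 0 < N := lt_of_lt_of_le Nat.zero_lt_one hN
    exact_mod_cast this
  have hN' : (N:ℝ) ≠ 0 := ne_of_gt hNpos
  set b : Fin N → ℝ := fun i => a i - abar with hb
  have hS : ∑ i : Fin N, b i = 0 := by
    simp only [hb, Finset.sum_sub_distrib, Finset.sum_const, Finset.card_univ,
      Fintype.card_fin, nsmul_eq_mul]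
    rw [habar]; field_simp; ring
  set Δ := ∑ i : Fin N, (a i - abar) ^ 2 with hΔ
  have hΔb : ∑ i : Fin N, b i ^ 2 = Δ := rfl
  have key : ∀ i : Fin N,
      ∑ p : Fin N, ∑ q : Fin N,
        (((1 - ρ0) * a i + 2 * ρ0 * a q - ρ0 * a p + c) - (abar + c)) ^ 2
      = (N:ℝ)^2 * (1-ρ0)^2 * b i ^2 + 5 * N * ρ0^2 * Δ := by
    intro i
    have inner : ∀ p : Fin N,
        ∑ q : Fin N, (((1 - ρ0) * a i + 2 * ρ0 * a q - ρ0 * a p + c) - (abar + c)) ^ 2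
        = (N:ℝ) * ((1-ρ0) * b i - ρ0 * b p)^2 + 4 * ρ0^2 * Δ := by
      intro p
      have h1 : ∀ q : Fin N,
          (((1 - ρ0) * a i + 2 * ρ0 * a q - ρ0 * a p + c) - (abar + c)) ^ 2
          = ((1-ρ0)*b i - ρ0 * b p)^2
            + (4*ρ0*((1-ρ0)*b i - ρ0*b p)) * b q + 4*ρ0^2 * b q^2 := by
        intro q; simp only [hb]; ring
      rw [Finset.sum_congr rfl (fun q _ => h1 q)]
      rw [Finset.sum_add_distrib, Finset.sum_add_distrib, Finset.sum_const,
        ← Finset.mul_sum, hS, ← Finset.mul_sum, hΔb]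
      simp [Finset.card_univ]
    rw [Finset.sum_congr rfl (fun p _ => inner p)]
    have h2 : ∀ p : Fin N, (N:ℝ) * ((1-ρ0) * b i - ρ0 * b p)^2 + 4 * ρ0^2 * Δ
        = ((N:ℝ)*(1-ρ0)^2*b i^2 + 4*ρ0^2*Δ)
          + (-(2*(N:ℝ)*ρ0*(1-ρ0)*b i)) * b p + ((N:ℝ)*ρ0^2) * b p^2 := by
      intro p; ring
    rw [Finset.sum_congr rfl (fun p _ => h2 p)]
    rw [Finset.sum_add_distrib, Finset.sum_add_distrib, Finset.sum_const,
      ← Finset.mul_sum, hS, ← Finset.mul_sum, hΔb]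
    simp [Finset.card_univ]
    ring
  have h3 : ∀ i : Fin N,
      (1 / (N : ℝ) ^ 2) * ((N:ℝ)^2 * (1-ρ0)^2 * b i ^2 + 5 * N * ρ0^2 * Δ)
      = (1-ρ0)^2 * b i ^2 + (5 * ρ0^2 * Δ) / N := by
    intro i; field_simp
  have hLHS : ∑ i : Fin N, (1 / (N : ℝ) ^ 2) *
        ∑ p : Fin N, ∑ q : Fin N,
          (((1 - ρ0) * a i + 2 * ρ0 * a q - ρ0 * a p + c) - (abar + c)) ^ 2
      = (1-ρ0)^2 * Δ + 5 * ρ0^2 * Δ := by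
    rw [Finset.sum_congr rfl (fun i _ => by rw [key i, h3 i])]
    rw [Finset.sum_add_distrib, ← Finset.mul_sum, hΔb, Finset.sum_const,
      Finset.card_univ, Fintype.card_fin, nsmul_eq_mul]
    field_simp
  rw [hLHS]
  nlinarith [hΔpos, mul_pos hρ0 hΔpos, mul_pos (mul_pos hρ0 hρ0) hΔpos]
end
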